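/- arXiv:1501.01712 — 3 statements merged into one kernel-verified Lean document; each statement's English description precedes it below -/
import Mathlib

section
/- Let E be a row-finite directed graph with no sources and n ≥ 1. There is a bijection from the set {(μ,ν) : μ ∈ E*, ν a path of length < n with r(ν) = s(μ)} to the set of paths of the graph E(n), under which the pair (μ,ν) corresponds to a path of length |μ| in E(n) with source ν and range [μν]_n. -/
/-- A directed graph: vertices, edges, range and source maps. -/
structure DGraph where
  V : Type
  E : Type
  r : E → V
  s : E → V

namespace DGraph

variable {G : DGraph}

/-- A path in a directed graph: a word of composable edges together with a source vertex
(so that length-zero paths are vertices). -/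
structure Path (G : DGraph) where
  src : G.V
  edges : List G.E
  chain : List.Chain' (fun a b => G.s a = G.r b) edges
  srcEq : ∀ a ∈ edges.getLast?, G.s a = src

/-- The range of a path. -/
def Path.rng (p : G.Path) : G.V := p.edges.head?.elim p.src G.r

/-- The length of a path. -/
def Path.length (p : G.Path) : ℕ := p.edges.length

/-- The length-zero path at a vertex. -/
def Path.nil (G : DGraph) (v : G.V) : G.Path :=
  ⟨v, [], List.isChain_nil, by simp⟩

@[simp] theorem Path.length_nil (v : G.V) : (Path.nil G v).length = 0 := rfl

/-- Prepend an edge to a path. -/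
def Path.cons (e : G.E) (p : G.Path) (h : p.rng = G.s e) : G.Path where
  src := p.src
  edges := e :: p.edges
  chain := by
    unfold List.Chain'
    rw [List.isChain_cons]
    refine ⟨fun b hb => ?_, p.chain⟩
    rw [← h]
    simp [Path.rng, Option.mem_def.mp hb]
  srcEq := by
    intro a ha
    cases hp : p.edges with
    | nil =>
      rw [hp] at ha
      simp only [List.getLast?_singleton, Option.mem_def, Option.some.injEq] at ha
      subst ha
      have h0 : p.rng = p.src := by simp [Path.rng, hp]
      rw [← h, h0]
    | cons f t =>
      apply p.srcEq
      rw [hp]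
      rw [hp, List.getLast?_cons_cons] at ha
      exact ha

@[simp] theorem Path.length_cons (e : G.E) (p : G.Path) (h : p.rng = G.s e) :
    (Path.cons e p h).length = p.length + 1 := rfl

/-- Remove the first edge of a path. -/
def Path.tail (p : G.Path) : G.Path where
  src := p.src
  edges := p.edges.tail
  chain := p.chain.tail
  srcEq := by
    intro a ha
    apply p.srcEq
    cases hp : p.edges with
    | nil => rw [hp] at ha; simp at ha
    | cons f t =>
      rw [hp] at ha
      simp only [List.tail_cons] at ha
      cases t with
      | nil => simp at ha
      | cons g u => rw [List.getLast?_cons_cons]; exact ha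

@[simp] theorem Path.length_tail (p : G.Path) : p.tail.length = p.length - 1 := by
  simp [Path.tail, Path.length]

/-- The initial segment of a path consisting of its first `k` edges. -/
def Path.take (p : G.Path) (k : ℕ) : G.Path where
  src := (p.edges.drop k).head?.elim p.src G.r
  edges := p.edges.take k
  chain := p.chain.take k
  srcEq := by
    intro a ha
    have hc : List.Chain' (fun a b => G.s a = G.r b) (p.edges.take k ++ p.edges.drop k) := by
      rw [List.take_append_drop]; exact p.chain
    unfold List.Chain' at hc
    rw [List.isChain_append] at hc
    obtain ⟨-, -, hadj⟩ := hc
    cases hd : p.edges.drop k with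
    | nil =>
      have htake : p.edges.take k = p.edges := by
        have h1 := List.take_append_drop k p.edges
        rw [hd, List.append_nil] at h1
        exact h1
      simp only [List.head?_nil, Option.elim]
      exact p.srcEq a (htake ▸ ha)
    | cons f t =>
      simp only [List.head?_cons, Option.elim]
      exact hadj a ha f (by rw [hd]; simp)

/-- `[μ]_n` : the initial segment of `μ` of length `|μ| mod n`. -/
def Path.trunc (m : ℕ) (p : G.Path) : G.Path := p.take (p.length % m)

/-- Concatenation of paths, `p` followed after `q` (so `p.append q` has range the range of `p`
and source the source of `q`). -/
def Path.append (p q : G.Path) (h : p.src = q.rng) : G.Path where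
  src := q.src
  edges := p.edges ++ q.edges
  chain := by
    unfold List.Chain'
    rw [List.isChain_append]
    refine ⟨p.chain, q.chain, fun a ha b hb => ?_⟩
    rw [p.srcEq a ha, h]
    simp [Path.rng, Option.mem_def.mp hb]
  srcEq := by
    intro a ha
    cases hq : q.edges with
    | nil =>
      rw [hq, List.append_nil] at ha
      have h0 : q.rng = q.src := by simp [Path.rng, hq]
      rw [p.srcEq a ha, h, h0]
    | cons f t =>
      apply q.srcEq
      rw [hq]
      rw [hq, List.getLast?_append_cons] at ha
      exact ha

/-- A graph is row-finite if every vertex receives finitely many edges. -/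
def RowFinite (G : DGraph) : Prop := ∀ v : G.V, {e : G.E | G.r e = v}.Finite

/-- A graph has no sources if every vertex receives an edge. -/
def NoSources (G : DGraph) : Prop := ∀ v : G.V, ∃ e : G.E, G.r e = v

/-- A graph is strongly connected if for all vertices `v, w` there is a path from `w` to `v`. -/
def StronglyConnected (G : DGraph) : Prop :=
  ∀ v w : G.V, ∃ p : G.Path, p.src = w ∧ p.rng = v

/-- The set of paths of length less than `n`. -/
abbrev PathLt (G : DGraph) (n : ℕ) := {p : G.Path // p.length < n}

/-- The graph `E(n)` of Kribs and Solel: vertices are paths of length `< n`, and edges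
are pairs `(e, μ)` with `r(μ) = s(e)` and `|μ| < n`, with source `μ` and range `[eμ]_n`. -/
def Eln (G : DGraph) (n : ℕ) : DGraph where
  V := PathLt G n
  E := {q : G.E × G.Path // q.2.length + 1 ≤ n ∧ q.2.rng = G.s q.1}
  s := fun q => ⟨q.1.2, Nat.lt_of_succ_le q.2.1⟩
  r := fun q =>
    if h : q.1.2.length + 1 < n then
      ⟨Path.cons q.1.1 q.1.2 q.2.2, by simpa using h⟩
    else
      ⟨Path.nil G (G.r q.1.1), Nat.lt_of_lt_of_le (Nat.succ_pos _) q.2.1⟩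

/-- A vertex of `E`, regarded as a length-zero vertex of `E(n)`. -/
def vtx (G : DGraph) (n : ℕ) (hn : 0 < n) (v : G.V) : PathLt G n :=
  ⟨Path.nil G v, by simpa using hn⟩

/-- `d` is the greatest common divisor of the set `S` of natural numbers. -/
def IsGCDOf (d : ℕ) (S : Set ℕ) : Prop :=
  (∀ k ∈ S, d ∣ k) ∧ ∀ c : ℕ, (∀ k ∈ S, c ∣ k) → c ∣ d

/-- The set of lengths of (nonempty) cycles of `G`. -/
def CycleLengths (G : DGraph) : Set ℕ :=
  {k | ∃ p : G.Path, p.rng = p.src ∧ p.edges ≠ [] ∧ p.length = k}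

/-- The set of lengths of (nonempty) cycles of `G` based at `v`. -/
def CycleLengthsAt (G : DGraph) (v : G.V) : Set ℕ :=
  {k | ∃ p : G.Path, p.src = v ∧ p.rng = v ∧ p.edges ≠ [] ∧ p.length = k}

/-- The relation `v ∼ w` iff there is a path from `w` to `v` whose length is divisible by `d`. -/
def SimRel (G : DGraph) (d : ℕ) (v w : G.V) : Prop :=
  ∃ p : G.Path, p.src = w ∧ p.rng = v ∧ d ∣ p.length

/-- The connected-component relation of a graph: the smallest equivalence relation
identifying the range and the source of each edge. -/
def Comp (G : DGraph) : G.V → G.V → Prop :=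
  Relation.EqvGen (fun a b => ∃ f : G.E, G.r f = a ∧ G.s f = b)

/-- The adjacency matrix of `E(n)` acting on vectors indexed by `E^{<n}`. -/
noncomputable def Aact (G : DGraph) (n : ℕ) (g : PathLt G n → ℝ) (v : PathLt G n) : ℝ :=
  ∑ᶠ (f : (Eln G n).E) (_ : (Eln G n).r f = v), g ((Eln G n).s f)

/-- The pushforward of a vector on `E^{<n}` along `ν ↦ [ν]_m`. -/
noncomputable def pushf (G : DGraph) (n m : ℕ) (g : PathLt G n → ℝ) (μ : PathLt G m) : ℝ :=
  ∑ᶠ (ν : PathLt G n) (_ : Path.trunc m ν.1 = μ.1), g ν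

instance : TopologicalSpace G.Path := ⊥

/-- The inverse limit `lim← E^{<n_k}` along the truncation maps. -/
def InvLim (G : DGraph) (n : ℕ → ℕ) : Type :=
  {f : (k : ℕ) → PathLt G (n k) // ∀ k, Path.trunc (n k) (f (k+1)).1 = (f k).1}

instance (G : DGraph) (n : ℕ → ℕ) : TopologicalSpace (InvLim G n) :=
  inferInstanceAs (TopologicalSpace
    {f : (k : ℕ) → PathLt G (n k) // ∀ k, Path.trunc (n k) (f (k+1)).1 = (f k).1})

noncomputable instance (G : DGraph) (n : ℕ → ℕ) : MeasurableSpace (InvLim G n) := borel _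

end DGraph

namespace DGraph

variable {G : DGraph}

theorem Path.ext' {p q : G.Path} (h1 : p.src = q.src) (h2 : p.edges = q.edges) : p = q := by
  cases p; cases q; simp_all

@[simp] theorem Path.src_tail' (p : G.Path) : p.tail.src = p.src := rfl
@[simp] theorem Path.edges_tail' (p : G.Path) : p.tail.edges = p.edges.tail := rfl
@[simp] theorem Path.src_cons' (e : G.E) (p : G.Path) (h) : (Path.cons e p h).src = p.src := rfl
@[simp] theorem Path.edges_cons' (e : G.E) (p : G.Path) (h) :
    (Path.cons e p h).edges = e :: p.edges := rfl
@[simp] theorem Path.rng_cons' (e : G.E) (p : G.Path) (h) : (Path.cons e p h).rng = G.r e := rfl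
@[simp] theorem Path.src_append' (p q : G.Path) (h) : (p.append q h).src = q.src := rfl
@[simp] theorem Path.edges_append' (p q : G.Path) (h) :
    (p.append q h).edges = p.edges ++ q.edges := rfl
@[simp] theorem Path.length_append' (p q : G.Path) (h) :
    (p.append q h).length = p.length + q.length := by
  simp [Path.length, Path.append]
@[simp] theorem Path.edges_take' (p : G.Path) (k : ℕ) : (p.take k).edges = p.edges.take k := rfl
theorem Path.src_take' (p : G.Path) (k : ℕ) :
    (p.take k).src = (p.edges.drop k).head?.elim p.src G.r := rfl
@[simp] theorem Path.src_nil' (v : G.V) : (Path.nil G v).src = v := rfl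
@[simp] theorem Path.edges_nil' (v : G.V) : (Path.nil G v).edges = [] := rfl
@[simp] theorem Path.rng_nil' (v : G.V) : (Path.nil G v).rng = v := rfl

theorem Path.rng_append' (p q : G.Path) (h) : (p.append q h).rng = p.rng := by
  cases hp : p.edges with
  | nil =>
    have h1 : (p.append q h).rng = q.rng := by simp [Path.rng, Path.append, hp]
    rw [h1, ← h]; simp [Path.rng, hp]
  | cons e t => simp [Path.rng, Path.append, hp]

theorem Path.rng_take' (p : G.Path) (k : ℕ) : (p.take k).rng = p.rng := by
  cases k with
  | zero => simp [Path.rng, Path.take]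
  | succ m =>
    cases hp : p.edges with
    | nil => simp [Path.rng, Path.take, hp]
    | cons e t => simp [Path.rng, Path.take, hp]

@[simp] theorem Path.length_trunc' (p : G.Path) (n : ℕ) :
    (Path.trunc n p).length = p.length % n := by
  simp only [Path.trunc, Path.length, Path.take, List.length_take]
  exact Nat.min_eq_left (Nat.mod_le _ _)

theorem Path.rng_trunc' (p : G.Path) (n : ℕ) : (Path.trunc n p).rng = p.rng :=
  Path.rng_take' p _

theorem Path.trunc_eq_of_lt {p : G.Path} {n : ℕ} (h : p.length < n) : Path.trunc n p = p := by
  have hm : p.length % n = p.length := Nat.mod_eq_of_lt h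
  refine Path.ext' ?_ ?_
  · rw [Path.trunc, Path.src_take', hm]
    simp [Path.length, List.drop_length]
  · rw [Path.trunc, Path.edges_take', hm]
    simp [Path.length]

theorem Path.tail_rng_of_cons {p : G.Path} {e : G.E} {t : List G.E} (hp : p.edges = e :: t) :
    p.tail.rng = G.s e := by
  cases t with
  | nil =>
    have h1 := p.srcEq e (by simp [hp])
    simp [Path.rng, Path.tail, hp, h1]
  | cons f u =>
    have hc := p.chain
    unfold List.Chain' at hc
    rw [hp, List.isChain_cons_cons] at hc
    simp [Path.rng, Path.tail, hp, hc.1]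

theorem Path.eq_cons {p : G.Path} {e : G.E} {t : List G.E} (hp : p.edges = e :: t) :
    p = Path.cons e p.tail (Path.tail_rng_of_cons hp) :=
  Path.ext' rfl (by simp [hp])

theorem Eln_s_val {n : ℕ} (f : (Eln G n).E) : ((Eln G n).s f).1 = f.1.2 := rfl

theorem Eln_r_pos {n : ℕ} (f : (Eln G n).E) (h : f.1.2.length + 1 < n) :
    ((Eln G n).r f).1 = Path.cons f.1.1 f.1.2 f.2.2 := by
  simp only [Eln, dif_pos h]

theorem Eln_r_neg {n : ℕ} (f : (Eln G n).E) (h : ¬ f.1.2.length + 1 < n) :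
    ((Eln G n).r f).1 = Path.nil G (G.r f.1.1) := by
  simp only [Eln, dif_neg h]

theorem rng_Eln_r {n : ℕ} (f : (Eln G n).E) : ((Eln G n).r f).1.rng = G.r f.1.1 := by
  by_cases h : f.1.2.length + 1 < n
  · rw [Eln_r_pos f h, Path.rng_cons']
  · rw [Eln_r_neg f h, Path.rng_nil']

/-- A path in `Eln G n` is determined by its source and the list of first components
of its edges. -/
theorem eln_det {n : ℕ} (q q' : Path (Eln G n)) (h1 : q.src = q'.src)
    (h2 : q.edges.map (fun f => f.1.1) = q'.edges.map (fun f => f.1.1)) : q = q' := by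
  cases hq : q.edges with
  | nil =>
    have hq' : q'.edges = [] := by
      rw [hq] at h2
      exact List.map_eq_nil_iff.mp h2.symm
    exact Path.ext' h1 (hq.trans hq'.symm)
  | cons f t =>
    obtain ⟨f', t', hq'⟩ : ∃ f' t', q'.edges = f' :: t' := by
      cases hh : q'.edges with
      | nil => rw [hq, hh] at h2; simp at h2
      | cons a b => exact ⟨a, b, rfl⟩
    have htail : q.tail = q'.tail := by
      apply eln_det
      · exact h1
      · rw [Path.edges_tail', Path.edges_tail', hq, hq']
        rw [hq, hq'] at h2
        simpa using congrArg List.tail h2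
    have hf : f = f' := by
      have h11 : f.1.1 = f'.1.1 := by
        rw [hq, hq'] at h2
        simpa using congrArg List.head? h2
      have a1 := Path.tail_rng_of_cons hq
      have a2 := Path.tail_rng_of_cons hq'
      rw [htail] at a1
      have h12 : f.1.2 = f'.1.2 := by
        have := congrArg Subtype.val (a1.symm.trans a2)
        rwa [Eln_s_val, Eln_s_val] at this
      exact Subtype.ext (Prod.ext h11 h12)
    refine Path.ext' h1 ?_
    rw [hq, hq', hf]
    have h3 := congrArg Path.edges htail
    rw [Path.edges_tail', Path.edges_tail', hq, hq'] at h3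
    simp only [List.tail_cons] at h3
    rw [h3]
termination_by q.edges.length
decreasing_by simp [Path.tail, hq]

theorem trunc_append_cons_lt {n : ℕ} (μ ν : G.Path) (hr : ν.rng = μ.src)
    {e : G.E} {t : List G.E} (hE : μ.edges = e :: t)
    (hκ : (Path.trunc n (μ.tail.append ν hr.symm)).rng = G.s e)
    (hA : (Path.trunc n (μ.tail.append ν hr.symm)).length + 1 < n) :
    Path.trunc n (μ.append ν hr.symm) =
      Path.cons e (Path.trunc n (μ.tail.append ν hr.symm)) hκ := by
  have hKe : (μ.tail.append ν hr.symm).edges = t ++ ν.edges := by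
    rw [Path.edges_append' μ.tail ν hr.symm]; simp [hE]
  have hpe : (μ.append ν hr.symm).edges = e :: (t ++ ν.edges) := by simp [hE]
  have hpl : (μ.append ν hr.symm).length = (μ.tail.append ν hr.symm).length + 1 := by
    simp only [Path.length, hpe, hKe, List.length_cons]
  have hkA : (μ.tail.append ν hr.symm).length % n + 1 < n := by
    have := Path.length_trunc' (μ.tail.append ν hr.symm) n
    omega
  have hmod2 : (μ.append ν hr.symm).length % n
      = (μ.tail.append ν hr.symm).length % n + 1 := by
    have h2 := Nat.mod_add_div (μ.tail.append ν hr.symm).length n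
    have h3 : (μ.append ν hr.symm).length
        = ((μ.tail.append ν hr.symm).length % n + 1)
          + n * ((μ.tail.append ν hr.symm).length / n) := by omega
    rw [h3, Nat.add_mul_mod_self_left, Nat.mod_eq_of_lt hkA]
  refine Path.ext' ?_ ?_
  · simp only [Path.trunc, Path.src_cons', Path.src_take']
    rw [hmod2, hpe, hKe, List.drop_succ_cons]
    rfl
  · simp only [Path.trunc, Path.edges_cons', Path.edges_take']
    rw [hmod2, hpe, hKe, List.take_succ_cons]

theorem trunc_append_cons_ge {n : ℕ} (hn : 0 < n) (μ ν : G.Path) (hr : ν.rng = μ.src)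
    {e : G.E} {t : List G.E} (hE : μ.edges = e :: t)
    (hA : ¬ (Path.trunc n (μ.tail.append ν hr.symm)).length + 1 < n) :
    Path.trunc n (μ.append ν hr.symm) = Path.nil G (G.r e) := by
  have hKe : (μ.tail.append ν hr.symm).edges = t ++ ν.edges := by
    rw [Path.edges_append' μ.tail ν hr.symm]; simp [hE]
  have hpe : (μ.append ν hr.symm).edges = e :: (t ++ ν.edges) := by simp [hE]
  have hpl : (μ.append ν hr.symm).length = (μ.tail.append ν hr.symm).length + 1 := by
    simp only [Path.length, hpe, hKe, List.length_cons]
  have hkn : (μ.tail.append ν hr.symm).length % n < n := Nat.mod_lt _ hn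
  have hkeq : (μ.tail.append ν hr.symm).length % n + 1 = n := by
    have := Path.length_trunc' (μ.tail.append ν hr.symm) n
    omega
  have hmod2 : (μ.append ν hr.symm).length % n = 0 := by
    have h2 := Nat.mod_add_div (μ.tail.append ν hr.symm).length n
    have h3 : (μ.append ν hr.symm).length
        = ((μ.tail.append ν hr.symm).length % n + 1)
          + n * ((μ.tail.append ν hr.symm).length / n) := by omega
    rw [h3, hkeq]
    have h4 : n + n * ((μ.tail.append ν hr.symm).length / n)
        = n * ((μ.tail.append ν hr.symm).length / n + 1) := by ring
    rw [h4, Nat.mul_mod_right]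
  refine Path.ext' ?_ ?_
  · simp only [Path.trunc, Path.src_take', Path.src_nil']
    rw [hmod2, List.drop_zero, hpe]
    rfl
  · simp only [Path.trunc, Path.edges_take', Path.edges_nil']
    rw [hmod2, List.take_zero]

/-- The forward map: from a pair `(μ, ν)` to a path in `Eln G n`, with its defining
properties. -/
def toEln (G : DGraph) (n : ℕ) (hn : 0 < n) (μ ν : G.Path) (hν : ν.length < n)
    (hr : ν.rng = μ.src) :
    {q : Path (Eln G n) // q.length = μ.length ∧ q.src = (⟨ν, hν⟩ : PathLt G n) ∧
      (q.rng).1 = Path.trunc n (μ.append ν hr.symm) ∧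
      q.edges.map (fun f => f.1.1) = μ.edges} :=
  match hE : μ.edges with
  | [] =>
    ⟨Path.nil (Eln G n) ⟨ν, hν⟩, by
      refine ⟨by show 0 = μ.edges.length; simp [hE], rfl, ?_, rfl⟩
      have h0 : μ.append ν hr.symm = ν := Path.ext' rfl (by simp [hE])
      rw [h0, Path.trunc_eq_of_lt hν]
      rfl⟩
  | e :: t =>
    let prev := toEln G n hn μ.tail ν hν hr
    let f : (Eln G n).E := ⟨(e, Path.trunc n (μ.tail.append ν hr.symm)), by
      refine ⟨?_, ?_⟩
      · show (Path.trunc n (μ.tail.append ν hr.symm)).length + 1 ≤ n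
        rw [Path.length_trunc']
        exact Nat.succ_le_of_lt (Nat.mod_lt _ hn)
      · show (Path.trunc n (μ.tail.append ν hr.symm)).rng = G.s e
        rw [Path.rng_trunc', Path.rng_append' μ.tail ν hr.symm]
        exact Path.tail_rng_of_cons hE⟩
    have hc : prev.1.rng = (Eln G n).s f := Subtype.ext prev.2.2.2.1
    ⟨Path.cons f prev.1 hc, by
      refine ⟨?_, prev.2.2.1, ?_, ?_⟩
      · rw [Path.length_cons, prev.2.1]
        show μ.edges.tail.length + 1 = μ.length
        simp [Path.length, hE]
      · rw [Path.rng_cons']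
        by_cases hA : (Path.trunc n (μ.tail.append ν hr.symm)).length + 1 < n
        · rw [Eln_r_pos f hA]
          exact (trunc_append_cons_lt μ ν hr hE
            (by rw [Path.rng_trunc', Path.rng_append' μ.tail ν hr.symm]
                exact Path.tail_rng_of_cons hE) hA).symm
        · rw [Eln_r_neg f hA]
          exact (trunc_append_cons_ge hn μ ν hr hE hA).symm
      · simp only [Path.edges_cons', List.map_cons]
        rw [prev.2.2.2.2]
        show e :: μ.edges.tail = e :: t
        rw [hE]
        simp⟩
termination_by μ.edges.length
decreasing_by simp [Path.tail, hE]

/-- The inverse construction: from a path of `Eln G n` to a path of `G`. -/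
def ofEln (G : DGraph) (n : ℕ) (q : Path (Eln G n)) : G.Path where
  src := ((q.edges.map (fun f => f.1.1)).getLast?).elim q.src.1.rng G.s
  edges := q.edges.map (fun f => f.1.1)
  chain := by
    refine (List.isChain_map _).mpr (q.chain.imp ?_)
    intro a b hab
    have h1 : a.1.2 = ((Eln G n).r b).1 := by
      have := congrArg Subtype.val hab
      rwa [Eln_s_val] at this
    rw [← a.2.2, h1, rng_Eln_r]
  srcEq := by
    intro a ha
    rw [Option.mem_def.mp ha]
    rfl

theorem ofEln_rng (G : DGraph) (n : ℕ) (q : Path (Eln G n)) :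
    q.src.1.rng = (ofEln G n q).src := by
  show _ = ((q.edges.map (fun f => f.1.1)).getLast?).elim q.src.1.rng G.s
  cases hl : q.edges.getLast? with
  | none =>
    rw [List.getLast?_map, hl]
    rfl
  | some f =>
    rw [List.getLast?_map, hl]
    have h1 := q.srcEq f hl
    have h2 : f.1.2 = q.src.1 := by
      have := congrArg Subtype.val h1
      rwa [Eln_s_val] at this
    show q.src.1.rng = G.s f.1.1
    rw [← h2]
    exact f.2.2

end DGraph

open DGraph in
/-- For a row-finite directed graph `E` with no sources and `n ≥ 1`, there
is a bijection from `{(μ,ν) : μ ∈ E*, ν ∈ s(μ)E^{<n}}` to the set of paths of `E(n)`, under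
which `(μ,ν)` corresponds to a path of length `|μ|` with source `ν` and range `[μν]_n`. -/
theorem Eln_paths_equiv (G : DGraph) (hrf : RowFinite G) (hns : NoSources G)
    (n : ℕ) (hn : 0 < n) :
    ∃ F : {q : G.Path × G.Path // q.2.length < n ∧ q.2.rng = q.1.src} ≃ Path (Eln G n),
      ∀ x, (F x).length = x.1.1.length ∧
        (F x).src = (⟨x.1.2, x.2.1⟩ : PathLt G n) ∧
        ((F x).rng).1 = Path.trunc n (x.1.1.append x.1.2 x.2.2.symm) := by
  classical
  let F : {q : G.Path × G.Path // q.2.length < n ∧ q.2.rng = q.1.src} → Path (Eln G n) :=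
    fun x => (toEln G n hn x.1.1 x.1.2 x.2.1 x.2.2).1
  have hinj : Function.Injective F := by
    intro x y h
    have px := (toEln G n hn x.1.1 x.1.2 x.2.1 x.2.2).2
    have py := (toEln G n hn y.1.1 y.1.2 y.2.1 y.2.2).2
    have hsrc : (F x).src = (F y).src := by rw [h]
    have hν : x.1.2 = y.1.2 := by
      have := px.2.1.symm.trans (hsrc.trans py.2.1)
      exact congrArg Subtype.val this
    have hedges : x.1.1.edges = y.1.1.edges :=
      px.2.2.2.symm.trans
        ((congrArg (fun p : Path (Eln G n) => p.edges.map (fun f => f.1.1)) h).trans py.2.2.2)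
    have hmsrc : x.1.1.src = y.1.1.src := by
      rw [← x.2.2, ← y.2.2, hν]
    exact Subtype.ext (Prod.ext (Path.ext' hmsrc hedges) hν)
  have hsurj : Function.Surjective F := by
    intro q
    refine ⟨⟨(ofEln G n q, q.src.1), q.src.2, ofEln_rng G n q⟩, ?_⟩
    have p2 := (toEln G n hn (ofEln G n q) q.src.1 q.src.2 (ofEln_rng G n q)).2
    refine eln_det _ _ ?_ ?_
    · exact p2.2.1.trans rfl
    · exact p2.2.2.2.trans rfl
  refine ⟨Equiv.ofBijective F ⟨hinj, hsurj⟩, fun x => ?_⟩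
  have p2 := (toEln G n hn x.1.1 x.1.2 x.2.1 x.2.2).2
  exact ⟨p2.1, p2.2.1, p2.2.2.1⟩
end

section
/- Let E be a strongly connected finite directed graph with no sources and n ∈ ℕ. There is a well-defined function C_n : E^0 × E^0 → ℤ/gcd(P_E, n)ℤ such that C_n(r(λ), s(λ)) = |λ| mod gcd(P_E, n) for every path λ; that is, any two paths with the same range and source have lengths congruent modulo gcd(P_E, n). -/
open DGraph in
theorem aux_rng_append (G : DGraph) (p q : G.Path) (h : p.src = q.rng) :
    (p.append q h).rng = p.rng := by
  show (p.edges ++ q.edges).head?.elim q.src G.r = p.rng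
  cases hp : p.edges with
  | nil =>
    have : p.src = q.edges.head?.elim q.src G.r := h
    simp [Path.rng, hp, ← this]
  | cons e t => simp [Path.rng, hp]

open DGraph in
theorem aux_length_append (G : DGraph) (p q : G.Path) (h : p.src = q.rng) :
    (p.append q h).length = p.length + q.length := by
  simp [Path.append, Path.length]

open DGraph in
theorem aux_dvd_cycle (G : DGraph) (P : ℕ) (hP : IsGCDOf P (CycleLengths G))
    (c : G.Path) (hc : c.rng = c.src) : P ∣ c.length := by
  by_cases he : c.edges = []
  · simp [Path.length, he]
  · exact hP.1 c.length ⟨c, hc, he, rfl⟩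

open DGraph in
/-- Let `E` be a strongly connected finite directed graph with no sources,
`n ∈ ℕ`, and `P_E` its period.  Any two paths with the same range and source have lengths
congruent modulo `gcd(P_E, n)`, and there is a well-defined `C_n : E^0 × E^0 → ℤ/gcd(P_E,n)ℤ`
with `C_n(r(λ), s(λ)) = |λ| mod gcd(P_E, n)` for every path `λ`. -/
theorem exists_Cn (G : DGraph) [Finite G.V] [Finite G.E]
    (hsc : StronglyConnected G) (hns : NoSources G)
    (n P : ℕ) (hP : IsGCDOf P (CycleLengths G)) :
    (∀ p q : G.Path, p.rng = q.rng → p.src = q.src →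
      (p.length : ZMod (Nat.gcd P n)) = (q.length : ZMod (Nat.gcd P n))) ∧
    ∃ C : G.V × G.V → ZMod (Nat.gcd P n),
      ∀ p : G.Path, C (p.rng, p.src) = (p.length : ZMod (Nat.gcd P n)) := by
  set d := Nat.gcd P n with hd
  have key : ∀ p q : G.Path, p.rng = q.rng → p.src = q.src →
      (p.length : ZMod d) = (q.length : ZMod d) := by
    intro p q hr hs
    obtain ⟨r, hrsrc, hrrng⟩ := hsc p.src p.rng
    have hp : p.src = r.rng := hrrng.symm
    have hq : q.src = r.rng := by rw [← hs]; exact hrrng.symm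
    have hcp : (p.append r hp).rng = (p.append r hp).src := by
      rw [aux_rng_append]
      show p.rng = r.src
      rw [hrsrc]
    have hcq : (q.append r hq).rng = (q.append r hq).src := by
      rw [aux_rng_append]
      show q.rng = r.src
      rw [hrsrc, hr]
    have h1 := aux_dvd_cycle G P hP _ hcp
    have h2 := aux_dvd_cycle G P hP _ hcq
    rw [aux_length_append] at h1 h2
    have hd1 : d ∣ p.length + r.length := dvd_trans (Nat.gcd_dvd_left P n) h1
    have hd2 : d ∣ q.length + r.length := dvd_trans (Nat.gcd_dvd_left P n) h2
    have z1 : ((p.length + r.length : ℕ) : ZMod d) = 0 := (ZMod.natCast_eq_zero_iff _ _).mpr hd1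
    have z2 : ((q.length + r.length : ℕ) : ZMod d) = 0 := (ZMod.natCast_eq_zero_iff _ _).mpr hd2
    push_cast at z1 z2
    linear_combination z1 - z2
  refine ⟨key, ?_⟩
  classical
  refine ⟨fun vw => if h : ∃ p : G.Path, p.rng = vw.1 ∧ p.src = vw.2
      then ((h.choose.length : ZMod d)) else 0, ?_⟩
  intro p
  have h : ∃ q : G.Path, q.rng = (p.rng, p.src).1 ∧ q.src = (p.rng, p.src).2 := ⟨p, rfl, rfl⟩
  simp only [h, dif_pos]
  exact key _ _ h.choose_spec.1 h.choose_spec.2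
end

section
/- Let E be a strongly connected finite directed graph with no sources, m | n, ρ = ρ(A_E) and x the Perron–Frobenius eigenvector of A_E. The vectors m_n on E^{<n} defined by m_n(μ) = (1/n)·ρ^{−|μ|}·x_{s(μ)} are compatible with the pushforwards: Σ_{τ ∈ E^{<n}, [τ]_m = μ} m_n(τ) = m_m(μ) for all μ ∈ E^{<m}. -/
section Aux

open DGraph

variable {G : DGraph}

theorem pext {p q : G.Path} (h1 : p.src = q.src) (h2 : p.edges = q.edges) : p = q := by
  cases p; cases q; simp_all

/-- Drop the first `k` edges of a path. -/
def pdrop (p : G.Path) (k : ℕ) : G.Path := DGraph.Path.tail^[k] p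

@[simp] theorem pdrop_src (p : G.Path) (k : ℕ) : (pdrop p k).src = p.src := by
  induction k with
  | zero => rfl
  | succ k ih => rw [pdrop, Function.iterate_succ_apply']; exact ih

@[simp] theorem pdrop_edges (p : G.Path) (k : ℕ) : (pdrop p k).edges = p.edges.drop k := by
  induction k with
  | zero => rfl
  | succ k ih =>
    rw [pdrop, Function.iterate_succ_apply']
    show (DGraph.Path.tail _).edges = _
    rw [DGraph.Path.tail, ← List.tail_drop]
    exact congrArg List.tail ih

theorem finite_len [Finite G.V] [Finite G.E] (L : ℕ) :
    {p : G.Path | p.length = L}.Finite := by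
  have hinj : Set.InjOn (fun p : G.Path => (p.src, p.edges)) {p | p.length = L} := by
    intro p _ q _ h
    exact pext (congrArg Prod.fst h) (congrArg Prod.snd h)
  apply Set.Finite.of_finite_image _ hinj
  apply Set.Finite.subset ((Set.finite_univ).prod (List.finite_length_eq G.E L))
  rintro ⟨v, l⟩ ⟨p, hp, heq⟩
  cases heq
  exact ⟨Set.mem_univ _, hp⟩

theorem finite_len_lt [Finite G.V] [Finite G.E] (n : ℕ) :
    {p : G.Path | p.length < n}.Finite := by
  have hsub : {p : G.Path | p.length < n} ⊆ ⋃ L ∈ Set.Iio n, {p : G.Path | p.length = L} :=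
    fun p hp => Set.mem_biUnion hp rfl
  exact (((Set.finite_Iio n).biUnion fun L _ => finite_len L).subset hsub)

theorem rng_head (p : G.Path) (h : p.edges ≠ []) : p.rng = G.r (p.edges.head h) := by
  rw [DGraph.Path.rng, List.head?_eq_head h]
  rfl

theorem tail_rng (p : G.Path) (h : p.edges ≠ []) :
    p.tail.rng = G.s (p.edges.head h) := by
  obtain ⟨e, rest, hp⟩ := List.exists_cons_of_ne_nil h
  · have he : p.edges.head h = e := by
      have h1 : p.edges.head? = some e := by rw [hp]; rfl
      rw [List.head?_eq_head h] at h1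
      exact Option.some_injective _ h1
    rw [he]
    have htl : p.tail.edges = rest := by show p.edges.tail = rest; rw [hp]; rfl
    rcases hr : rest with _ | ⟨f, t⟩
    · have : p.tail.rng = p.src := by
        rw [DGraph.Path.rng, htl, hr]
        rfl
      rw [this]
      exact (p.srcEq e (by rw [hp, hr]; simp)).symm
    · have : p.tail.rng = G.r f := by
        rw [DGraph.Path.rng, htl, hr]
        rfl
      rw [this]
      have hc := p.chain
      unfold List.Chain' at hc
      rw [hp, hr, List.isChain_cons_cons] at hc
      exact hc.1.symm

theorem cons_head_tail (p : G.Path) (h : p.edges ≠ []) (hh : p.tail.rng = G.s (p.edges.head h)) :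
    DGraph.Path.cons (p.edges.head h) p.tail hh = p := by
  refine pext rfl ?_
  show p.edges.head h :: p.edges.tail = p.edges
  exact List.cons_head_tail h

@[simp] theorem cons_rng (e : G.E) (p : G.Path) (h : p.rng = G.s e) :
    (DGraph.Path.cons e p h).rng = G.r e := rfl

theorem eigsum {G : DGraph} [Finite G.V] [Finite G.E] (ρ : ℝ) (x : G.V → ℝ)
    (heig : ∀ v, ∑ᶠ (e : G.E) (_ : G.r e = v), x (G.s e) = ρ * x v) (L : ℕ) :
    ∀ v : G.V, ∑ᶠ q ∈ {q : G.Path | q.length = L ∧ q.rng = v}, x q.src = ρ ^ L * x v := by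
  induction L with
  | zero =>
    intro v
    have hset : {q : G.Path | q.length = 0 ∧ q.rng = v} = {DGraph.Path.nil G v} := by
      ext q
      constructor
      · rintro ⟨h1, h2⟩
        have he : q.edges = [] := List.length_eq_zero_iff.mp h1
        have hs : q.src = v := by
          have hrs : q.rng = q.src := by rw [DGraph.Path.rng, he]; rfl
          rw [← h2, hrs]
        exact pext hs he
      · rintro rfl
        exact ⟨rfl, rfl⟩
    rw [hset, finsum_mem_singleton]
    simp [DGraph.Path.nil, DGraph.Path.rng]
  | succ L ih =>
    intro v
    have hEv : {e : G.E | G.r e = v}.Finite := Set.toFinite _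
    have hQ : ∀ w : G.V, {q : G.Path | q.length = L ∧ q.rng = w}.Finite := fun w =>
      (finite_len L).subset fun q hq => hq.1
    have hS : {q : G.Path | q.length = L + 1 ∧ q.rng = v}.Finite :=
      (finite_len (L + 1)).subset fun q hq => hq.1
    rw [finsum_mem_eq_finite_toFinset_sum _ hS]
    have hne : ∀ q ∈ hS.toFinset, q.edges ≠ [] := by
      intro q hq
      have := (hS.mem_toFinset.mp hq).1
      intro hnil
      rw [DGraph.Path.length, hnil] at this
      simp at this
    have hbij : ∑ q ∈ hS.toFinset, x q.src
        = ∑ p ∈ hEv.toFinset.sigma (fun e => (hQ (G.s e)).toFinset), x p.2.src := by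
      refine Finset.sum_bij'
        (fun q hq => ⟨q.edges.head (hne q hq), q.tail⟩)
        (fun p hp => DGraph.Path.cons p.1 p.2
          ((hQ (G.s p.1)).mem_toFinset.mp (Finset.mem_sigma.mp hp).2).2)
        ?_ ?_ ?_ ?_ ?_
      · intro q hq
        obtain ⟨h1, h2⟩ := hS.mem_toFinset.mp hq
        rw [Finset.mem_sigma]
        constructor
        · rw [hEv.mem_toFinset]
          rw [rng_head q (hne q hq)] at h2
          exact h2
        · rw [(hQ _).mem_toFinset]
          refine ⟨?_, tail_rng q (hne q hq)⟩
          show q.edges.tail.length = L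
          rw [List.length_tail]
          rw [DGraph.Path.length] at h1
          omega
      · rintro ⟨e, q⟩ hp
        obtain ⟨h1, h2⟩ := Finset.mem_sigma.mp hp
        rw [hEv.mem_toFinset] at h1
        obtain ⟨hq1, hq2⟩ := (hQ _).mem_toFinset.mp h2
        rw [hS.mem_toFinset]
        exact ⟨by rw [DGraph.Path.length_cons]; rw [hq1], by rw [cons_rng]; exact h1⟩
      · intro q hq
        exact cons_head_tail q (hne q hq) (tail_rng q (hne q hq))
      · rintro ⟨e, q⟩ hp
        refine Sigma.ext rfl (heq_of_eq ?_)
        exact pext rfl rfl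
      · intro q hq
        rfl
    rw [hbij, Finset.sum_sigma]
    have hinner : ∀ e ∈ hEv.toFinset, ∑ q ∈ (hQ (G.s e)).toFinset, x q.src = ρ ^ L * x (G.s e) := by
      intro e _
      rw [← finsum_mem_eq_finite_toFinset_sum _ (hQ (G.s e))]
      exact ih (G.s e)
    rw [Finset.sum_congr rfl hinner, ← Finset.mul_sum]
    have hEsum : ∑ e ∈ hEv.toFinset, x (G.s e) = ρ * x v := by
      rw [← finsum_mem_eq_finite_toFinset_sum (fun e => x (G.s e)) hEv]
      exact heig v
    rw [hEsum, pow_succ]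
    ring

end Aux

section Aux2

open DGraph

variable {G : DGraph}

@[simp] theorem append_edges (p q : G.Path) (h : p.src = q.rng) :
    (DGraph.Path.append p q h).edges = p.edges ++ q.edges := rfl

@[simp] theorem append_src (p q : G.Path) (h : p.src = q.rng) :
    (DGraph.Path.append p q h).src = q.src := rfl

theorem append_length (p q : G.Path) (h : p.src = q.rng) :
    (DGraph.Path.append p q h).length = p.length + q.length :=
  List.length_append

end Aux2

open DGraph in
/-- Let `E` be a strongly connected finite directed graph with no sources,
`m ∣ n`, `ρ = ρ(A_E)` and `x` the Perron–Frobenius eigenvector of `A_E`.  The vectors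
`m_n(μ) = (1/n)·ρ^{−|μ|}·x_{s(μ)}` on `E^{<n}` are compatible with the pushforwards:
`Σ_{τ ∈ E^{<n}, [τ]_m = μ} m_n(τ) = m_m(μ)` for all `μ ∈ E^{<m}`. -/
theorem perron_vectors_compatible (G : DGraph) [Finite G.V] [Finite G.E]
    (hsc : StronglyConnected G) (hns : NoSources G)
    (m n : ℕ) (hm : 0 < m) (hn : 0 < n) (hdvd : m ∣ n)
    (ρ : ℝ) (hρ : 0 < ρ) (x : G.V → ℝ) (hx : ∀ v, 0 < x v)
    (heig : ∀ v, ∑ᶠ (e : G.E) (_ : G.r e = v), x (G.s e) = ρ * x v) :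
    ∀ μ : PathLt G m,
      (∑ᶠ (τ : PathLt G n) (_ : Path.trunc m τ.1 = μ.1),
        (1 / (n : ℝ)) * ρ ^ (-(τ.1.length : ℤ)) * x τ.1.src)
      = (1 / (m : ℝ)) * ρ ^ (-(μ.1.length : ℤ)) * x μ.1.src := by
  intro μ
  have hρ' : ρ ≠ 0 := ne_of_gt hρ
  obtain ⟨k, hk⟩ := hdvd
  have hk0 : 0 < k := by
    rcases Nat.eq_zero_or_pos k with h | h
    · rw [h, Nat.mul_zero] at hk; omega
    · exact h
  have hμlt : μ.1.length < m := μ.2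
  haveI : Finite (PathLt G n) := (finite_len_lt n).to_subtype
  have hQ : ∀ j : ℕ, {q : G.Path | q.length = j * m ∧ q.rng = μ.1.src}.Finite := fun j =>
    (finite_len (j * m)).subset fun q hq => hq.1
  have hS : {τ : PathLt G n | DGraph.Path.trunc m τ.1 = μ.1}.Finite := Set.toFinite _
  have hfacts : ∀ τ : PathLt G n, DGraph.Path.trunc m τ.1 = μ.1 →
      μ.1.length = τ.1.length % m ∧
      τ.1.edges.take (τ.1.length % m) = μ.1.edges ∧
      (τ.1.edges.drop (τ.1.length % m)).head?.elim τ.1.src G.r = μ.1.src := by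
    intro τ hτ
    refine ⟨?_, congrArg DGraph.Path.edges hτ, congrArg DGraph.Path.src hτ⟩
    have h1 : (DGraph.Path.trunc m τ.1).length = τ.1.length % m := by
      show (τ.1.edges.take (τ.1.length % m)).length = _
      rw [List.length_take]
      exact min_eq_left (Nat.mod_le _ _)
    rw [← hτ, h1]
  refine (finsum_mem_eq_finite_toFinset_sum
    (fun τ : PathLt G n => (1 / (n : ℝ)) * ρ ^ (-(τ.1.length : ℤ)) * x τ.1.src) hS).trans ?_
  refine Eq.trans (Finset.sum_bij'
    (t := (Finset.range k).sigma (fun j => (hQ j).toFinset))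
    (g := fun p : Σ _ : ℕ, G.Path =>
      (1 / (n : ℝ)) * ρ ^ (-((μ.1.length + p.1 * m : ℕ) : ℤ)) * x p.2.src)
    (fun τ _ => ⟨τ.1.length / m, pdrop τ.1 μ.1.length⟩)
    (fun p hp => ⟨DGraph.Path.append μ.1 p.2
        (((hQ p.1).mem_toFinset.mp (Finset.mem_sigma.mp hp).2).2).symm,
      by
        rw [append_length, ((hQ p.1).mem_toFinset.mp (Finset.mem_sigma.mp hp).2).1]
        calc μ.1.length + p.1 * m < m + p.1 * m := by omega
          _ = (p.1 + 1) * m := by ring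
          _ ≤ k * m := Nat.mul_le_mul_right m (Finset.mem_range.mp (Finset.mem_sigma.mp hp).1)
          _ = n := by rw [hk, Nat.mul_comm]⟩)
    ?_ ?_ ?_ ?_ ?_) ?_
  · -- hi : image of i lands in sigma
    intro τ hτ
    obtain ⟨hlen, hedges, hsrc⟩ := hfacts τ (hS.mem_toFinset.mp hτ)
    rw [Finset.mem_sigma]
    constructor
    · rw [Finset.mem_range]
      refine Nat.div_lt_of_lt_mul ?_
      have := τ.2
      omega
    · rw [(hQ _).mem_toFinset]
      constructor
      · show (pdrop τ.1 μ.1.length).edges.length = τ.1.length / m * m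
        rw [pdrop_edges, List.length_drop]
        have hml := Nat.mod_add_div' τ.1.length m
        have hτl : τ.1.length = τ.1.edges.length := rfl
        omega
      · rw [DGraph.Path.rng, pdrop_edges, pdrop_src, hlen]
        exact hsrc
  · -- hj : image of j lands in hS.toFinset
    rintro ⟨j0, q⟩ hp
    obtain ⟨hj0, hqm⟩ := Finset.mem_sigma.mp hp
    obtain ⟨hq1, hq2⟩ := (hQ j0).mem_toFinset.mp hqm
    rw [hS.mem_toFinset]
    show DGraph.Path.trunc m (DGraph.Path.append μ.1 q hq2.symm) = μ.1
    have hmod : (DGraph.Path.append μ.1 q hq2.symm).length % m = μ.1.length := by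
      rw [append_length, hq1, Nat.add_mul_mod_self_right, Nat.mod_eq_of_lt hμlt]
    show (DGraph.Path.append μ.1 q hq2.symm).take
      ((DGraph.Path.append μ.1 q hq2.symm).length % m) = μ.1
    rw [hmod]
    refine pext ?_ ?_
    · show ((μ.1.edges ++ q.edges).drop μ.1.edges.length).head?.elim q.src G.r = μ.1.src
      rw [List.drop_left]
      exact hq2
    · show (μ.1.edges ++ q.edges).take μ.1.edges.length = μ.1.edges
      exact List.take_left
  · -- left inverse
    intro τ hτ
    obtain ⟨hlen, hedges, hsrc⟩ := hfacts τ (hS.mem_toFinset.mp hτ)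
    apply Subtype.ext
    refine pext (pdrop_src τ.1 μ.1.length) ?_
    show μ.1.edges ++ (pdrop τ.1 μ.1.length).edges = τ.1.edges
    rw [pdrop_edges, hlen, ← hedges]
    exact List.take_append_drop _ _
  · -- right inverse
    rintro ⟨j0, q⟩ hp
    obtain ⟨hj0, hqm⟩ := Finset.mem_sigma.mp hp
    obtain ⟨hq1, hq2⟩ := (hQ j0).mem_toFinset.mp hqm
    refine Sigma.ext ?_ (heq_of_eq ?_)
    · show (DGraph.Path.append μ.1 q hq2.symm).length / m = j0
      rw [append_length, hq1, Nat.add_mul_div_right _ _ hm, Nat.div_eq_of_lt hμlt,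
        Nat.zero_add]
    · show pdrop (DGraph.Path.append μ.1 q hq2.symm) μ.1.length = q
      refine pext (pdrop_src _ _) ?_
      rw [pdrop_edges]
      show (μ.1.edges ++ q.edges).drop μ.1.edges.length = q.edges
      exact List.drop_left
  · -- values agree
    intro τ hτ
    obtain ⟨hlen, -, -⟩ := hfacts τ (hS.mem_toFinset.mp hτ)
    have hL : μ.1.length + τ.1.length / m * m = τ.1.length := by
      rw [hlen]; exact Nat.mod_add_div' _ _
    show (1 / (n : ℝ)) * ρ ^ (-(τ.1.length : ℤ)) * x τ.1.src
        = (1 / (n : ℝ)) * ρ ^ (-((μ.1.length + τ.1.length / m * m : ℕ) : ℤ))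
          * x (pdrop τ.1 μ.1.length).src
    rw [pdrop_src, hL]
  · -- evaluate the sigma sum
    rw [Finset.sum_sigma]
    have hinner : ∀ j0 ∈ Finset.range k,
        ∑ q ∈ (hQ j0).toFinset,
          (1 / (n : ℝ)) * ρ ^ (-((μ.1.length + j0 * m : ℕ) : ℤ)) * x q.src
        = (1 / (m : ℝ)) * (1 / (k : ℝ)) * ρ ^ (-(μ.1.length : ℤ)) * x μ.1.src := by
      intro j0 _
      have hz := eigsum ρ x heig (j0 * m) μ.1.src
      rw [finsum_mem_eq_finite_toFinset_sum _ (hQ j0)] at hz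
      rw [← Finset.mul_sum, hz]
      have hzp : ρ ^ (-((μ.1.length + j0 * m : ℕ) : ℤ)) * ρ ^ (j0 * m)
          = ρ ^ (-(μ.1.length : ℤ)) := by
        rw [← zpow_natCast ρ (j0 * m), ← zpow_add₀ hρ']
        congr 1
        push_cast
        ring
      have hn' : (n : ℝ) = (m : ℝ) * (k : ℝ) := by exact_mod_cast congrArg Nat.cast hk
      calc (1 / (n : ℝ)) * ρ ^ (-((μ.1.length + j0 * m : ℕ) : ℤ))
            * (ρ ^ (j0 * m) * x μ.1.src)
          = (1 / (n : ℝ)) * (ρ ^ (-((μ.1.length + j0 * m : ℕ) : ℤ)) * ρ ^ (j0 * m))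
            * x μ.1.src := by ring
        _ = (1 / (n : ℝ)) * ρ ^ (-(μ.1.length : ℤ)) * x μ.1.src := by rw [hzp]
        _ = (1 / (m : ℝ)) * (1 / (k : ℝ)) * ρ ^ (-(μ.1.length : ℤ)) * x μ.1.src := by
            rw [hn']; ring
    rw [Finset.sum_congr rfl hinner, Finset.sum_const, Finset.card_range, nsmul_eq_mul]
    have hkne : (k : ℝ) ≠ 0 := Nat.cast_ne_zero.mpr hk0.ne'
    have h1 : (k : ℝ) * (1 / (k : ℝ)) = 1 := by field_simp
    calc (k : ℝ) * ((1 / (m : ℝ)) * (1 / (k : ℝ)) * ρ ^ (-(μ.1.length : ℤ)) * x μ.1.src)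
        = ((k : ℝ) * (1 / (k : ℝ))) * ((1 / (m : ℝ)) * ρ ^ (-(μ.1.length : ℤ)) * x μ.1.src) := by
          ring
      _ = (1 / (m : ℝ)) * ρ ^ (-(μ.1.length : ℤ)) * x μ.1.src := by rw [h1, one_mul]
end
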